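/- Let Θ and σ be d×d real matrices, b, r₀ ∈ ℝ^d, X : [0,1] → ℝ^d continuous with X(0) = 0, and r : [0,1] → ℝ^d continuous with r(t) = r₀ + ∫₀ᵗ Θ(b − r(s)) ds + σX(t) for all t ∈ [0,1]. Set C := sup_{v∈[0,1]} ‖Θ(b − r(v))‖. Then for every integer N ≥ 1, with t_k := k/N, Δr_k := r(t_{k+1}) − r(t_k), and ΔX_k := X(t_{k+1}) − X(t_k), we have ‖(1/N)∑_{k=0}^{N−1} Δr_k Δr_kᵀ − σ·((1/N)∑_{k=0}^{N−1} ΔX_k ΔX_kᵀ)·σᵀ‖ ≤ C²/N² + (2‖σ‖C/N²)·∑_{k=0}^{N−1} ‖ΔX_k‖. -/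

import Mathlib

open Matrix intervalIntegral
open scoped Matrix.Norms.L2Operator

/-- The rank-one matrix `x yᵀ` built from two vectors of `ℝ^d`. -/
noncomputable def outer {d : ℕ} (x y : EuclideanSpace ℝ (Fin d)) : Matrix (Fin d) (Fin d) ℝ :=
  Matrix.vecMulVec (EuclideanSpace.equiv (Fin d) ℝ x) (EuclideanSpace.equiv (Fin d) ℝ y)

/-- A matrix acting on `ℝ^d` (with the Euclidean norm) by matrix-vector multiplication. -/
noncomputable def mvec {d : ℕ} (A : Matrix (Fin d) (Fin d) ℝ) (x : EuclideanSpace ℝ (Fin d)) :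
    EuclideanSpace ℝ (Fin d) := Matrix.toEuclideanLin A x


lemma mvec_outer {d : ℕ} (x y z : EuclideanSpace ℝ (Fin d)) :
    mvec (outer x y) z = (inner ℝ y z : ℝ) • x := by
  ext i
  simp [mvec, outer, Matrix.toEuclideanLin_apply, Matrix.mulVec, dotProduct,
    Matrix.vecMulVec_apply, PiLp.inner_apply, Finset.sum_mul, Finset.mul_sum,
    RCLike.inner_apply, conj_trivial]
  congr 1
  ext j
  ring

lemma norm_outer_le {d : ℕ} (x y : EuclideanSpace ℝ (Fin d)) :
    ‖outer x y‖ ≤ ‖x‖ * ‖y‖ := by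
  rw [Matrix.l2_opNorm_def]
  apply ContinuousLinearMap.opNorm_le_bound _ (mul_nonneg (norm_nonneg _) (norm_nonneg _))
  intro z
  have : (Matrix.toEuclideanLin (outer x y)) z = (inner ℝ y z : ℝ) • x := mvec_outer x y z
  calc ‖(Matrix.toEuclideanLin.trans LinearMap.toContinuousLinearMap) (outer x y) z‖
      = ‖(inner ℝ y z : ℝ) • x‖ := by
        exact congrArg norm this
    _ = |(inner ℝ y z : ℝ)| * ‖x‖ := by rw [norm_smul, Real.norm_eq_abs]
    _ ≤ (‖y‖ * ‖z‖) * ‖x‖ := by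
        gcongr; exact abs_real_inner_le_norm y z
    _ = ‖x‖ * ‖y‖ * ‖z‖ := by ring

lemma norm_mvec_le {d : ℕ} (A : Matrix (Fin d) (Fin d) ℝ) (x : EuclideanSpace ℝ (Fin d)) :
    ‖mvec A x‖ ≤ ‖A‖ * ‖x‖ :=
  A.l2_opNorm_mulVec x

lemma outer_mvec_mvec {d : ℕ} (σ : Matrix (Fin d) (Fin d) ℝ) (x y : EuclideanSpace ℝ (Fin d)) :
    outer (mvec σ x) (mvec σ y) = σ * outer x y * σᵀ := by
  ext i j
  simp [outer, mvec, Matrix.toEuclideanLin_apply, Matrix.mul_apply, Matrix.vecMulVec_apply,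
    Matrix.mulVec, dotProduct, Matrix.transpose_apply, Finset.sum_mul, Finset.mul_sum]
  congr 1; ext k; congr 1; ext l; ring

lemma outer_add_left {d : ℕ} (x y z : EuclideanSpace ℝ (Fin d)) :
    outer (x + y) z = outer x z + outer y z := by
  ext i j
  simp [outer, Matrix.vecMulVec_apply, add_mul]

lemma outer_add_right {d : ℕ} (x y z : EuclideanSpace ℝ (Fin d)) :
    outer x (y + z) = outer x y + outer x z := by
  ext i j
  simp [outer, Matrix.vecMulVec_apply, mul_add]

/-- (Pathwise step of Lemma 5.5 of the paper.) If `r` solves the Vasicek-type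
equation `r t = r₀ + ∫₀ᵗ Θ(b − r s) ds + σ X s` on `[0,1]` and
`C = sup_{v∈[0,1]} ‖Θ(b − r v)‖`, then for each `N ≥ 1` the realized quadratic variation of `r`
compares to that of `X` by
`‖(1/N)∑ Δr_k Δr_kᵀ − σ ((1/N)∑ ΔX_k ΔX_kᵀ) σᵀ‖ ≤ C²/N² + (2‖σ‖C/N²) ∑ ‖ΔX_k‖`. -/
theorem stmt_12 (d : ℕ) (Θ σ : Matrix (Fin d) (Fin d) ℝ)
    (b r₀ : EuclideanSpace ℝ (Fin d)) (X r : ℝ → EuclideanSpace ℝ (Fin d))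
    (hXcont : ContinuousOn X (Set.Icc 0 1)) (hX0 : X 0 = 0)
    (hrcont : ContinuousOn r (Set.Icc 0 1))
    (hr : ∀ t ∈ Set.Icc (0:ℝ) 1,
      r t = r₀ + (∫ s in (0:ℝ)..t, mvec Θ (b - r s)) + mvec σ (X t))
    (C : ℝ) (hC : C = ⨆ v : Set.Icc (0:ℝ) 1, ‖mvec Θ (b - r v)‖) :
    ∀ N : ℕ, 1 ≤ N →
      ‖(1 / (N:ℝ)) • ∑ k ∈ Finset.range N,
            outer (r (((k:ℝ) + 1) / N) - r ((k:ℝ) / N)) (r (((k:ℝ) + 1) / N) - r ((k:ℝ) / N))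
          - σ * ((1 / (N:ℝ)) • ∑ k ∈ Finset.range N,
              outer (X (((k:ℝ) + 1) / N) - X ((k:ℝ) / N))
                (X (((k:ℝ) + 1) / N) - X ((k:ℝ) / N))) * σᵀ‖
        ≤ C ^ 2 / (N:ℝ) ^ 2 +
          (2 * ‖σ‖ * C / (N:ℝ) ^ 2) *
            ∑ k ∈ Finset.range N, ‖X (((k:ℝ) + 1) / N) - X ((k:ℝ) / N)‖ := by
  intro N hN
  have hN0 : (0:ℝ) < N := by exact_mod_cast hN
  set f : ℝ → EuclideanSpace ℝ (Fin d) := fun s => mvec Θ (b - r s) with hf_def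
  have hfcont : ContinuousOn f (Set.Icc 0 1) := by
    have h1 : Continuous fun v : EuclideanSpace ℝ (Fin d) => mvec Θ v :=
      (Matrix.toEuclideanLin Θ).continuous_of_finiteDimensional
    exact h1.comp_continuousOn (continuousOn_const.sub hrcont)
  have hbdd : BddAbove (Set.range fun v : Set.Icc (0:ℝ) 1 => ‖f v‖) := by
    have heq : (Set.range fun v : Set.Icc (0:ℝ) 1 => ‖f ↑v‖)
        = (fun v => ‖f v‖) '' Set.Icc 0 1 := (Set.image_eq_range (fun v => ‖f v‖) (Set.Icc (0:ℝ) 1)).symm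
    rw [heq]
    exact (isCompact_Icc.image_of_continuousOn hfcont.norm).bddAbove
  have hfC : ∀ v ∈ Set.Icc (0:ℝ) 1, ‖f v‖ ≤ C := fun v hv => by
    rw [hC]; exact le_ciSup hbdd ⟨v, hv⟩
  have hC0 : 0 ≤ C := le_trans (norm_nonneg _) (hfC 0 (by norm_num))
  -- membership of grid points
  have hmem : ∀ k : ℕ, k ≤ N → (k:ℝ)/N ∈ Set.Icc (0:ℝ) 1 := by
    intro k hk
    constructor
    · positivity
    · rw [div_le_one hN0]; exact_mod_cast hk
  have hle : ∀ k : ℕ, (k:ℝ)/N ≤ ((k:ℝ)+1)/N := by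
    intro k
    gcongr
    linarith
  -- integrability
  have hint : ∀ t ∈ Set.Icc (0:ℝ) 1, IntervalIntegrable f MeasureTheory.volume 0 t := by
    intro t ht
    apply (hfcont.mono _).intervalIntegrable
    exact Set.uIcc_subset_Icc (by norm_num) ht
  set I : ℕ → EuclideanSpace ℝ (Fin d) :=
    fun k => ∫ s in ((k:ℝ)/N)..(((k:ℝ)+1)/N), f s with hI_def
  have key : ∀ k ∈ Finset.range N,
      r (((k:ℝ) + 1) / N) - r ((k:ℝ) / N)
        = I k + mvec σ (X (((k:ℝ) + 1) / N) - X ((k:ℝ) / N)) := by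
    intro k hk
    have hk' : k < N := Finset.mem_range.mp hk
    have ht0 : (k:ℝ)/N ∈ Set.Icc (0:ℝ) 1 := hmem k hk'.le
    have ht1 : ((k:ℝ)+1)/N ∈ Set.Icc (0:ℝ) 1 := by
      have := hmem (k+1) hk'
      push_cast at this ⊢
      exact this
    rw [hr _ ht1, hr _ ht0]
    have hsub : mvec σ (X (((k:ℝ)+1)/N) - X ((k:ℝ)/N))
        = mvec σ (X (((k:ℝ)+1)/N)) - mvec σ (X ((k:ℝ)/N)) :=
      map_sub (Matrix.toEuclideanLin σ) _ _
    rw [hsub, hI_def]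
    simp only []
    rw [← intervalIntegral.integral_interval_sub_left (hint _ ht1) (hint _ ht0)]
    abel
  have hInorm : ∀ k ∈ Finset.range N, ‖I k‖ ≤ C / N := by
    intro k hk
    have hk' : k < N := Finset.mem_range.mp hk
    have ht0 : (k:ℝ)/N ∈ Set.Icc (0:ℝ) 1 := hmem k hk'.le
    have ht1 : ((k:ℝ)+1)/N ∈ Set.Icc (0:ℝ) 1 := by
      have := hmem (k+1) hk'
      push_cast at this ⊢
      exact this
    have hb : ‖∫ s in ((k:ℝ)/N)..(((k:ℝ)+1)/N), f s‖ ≤ C * |((k:ℝ)+1)/N - (k:ℝ)/N| := by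
      apply intervalIntegral.norm_integral_le_of_norm_le_const
      intro x hx
      rw [Set.uIoc_of_le (hle k)] at hx
      exact hfC x ⟨le_trans ht0.1 hx.1.le, le_trans hx.2 ht1.2⟩
    have habs : |((k:ℝ)+1)/N - (k:ℝ)/N| = 1/N := by
      rw [div_sub_div_same]
      rw [show (k:ℝ) + 1 - k = 1 by ring]
      rw [abs_of_nonneg (by positivity)]
    calc ‖I k‖ ≤ C * |((k:ℝ)+1)/N - (k:ℝ)/N| := hb
      _ = C / N := by rw [habs]; ring
  have hmain : ((1 / (N:ℝ)) • ∑ k ∈ Finset.range N,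
            outer (r (((k:ℝ) + 1) / N) - r ((k:ℝ) / N)) (r (((k:ℝ) + 1) / N) - r ((k:ℝ) / N))
          - σ * ((1 / (N:ℝ)) • ∑ k ∈ Finset.range N,
              outer (X (((k:ℝ) + 1) / N) - X ((k:ℝ) / N))
                (X (((k:ℝ) + 1) / N) - X ((k:ℝ) / N))) * σᵀ)
      = (1 / (N:ℝ)) • ∑ k ∈ Finset.range N,
          (outer (I k) (I k)
           + outer (I k) (mvec σ (X (((k:ℝ) + 1) / N) - X ((k:ℝ) / N)))
           + outer (mvec σ (X (((k:ℝ) + 1) / N) - X ((k:ℝ) / N))) (I k)) := by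
    rw [Matrix.mul_smul, Matrix.smul_mul, ← smul_sub]
    congr 1
    rw [Finset.mul_sum, Finset.sum_mul, ← Finset.sum_sub_distrib]
    refine Finset.sum_congr rfl fun k hk => ?_
    rw [key k hk, ← outer_mvec_mvec, outer_add_left, outer_add_right, outer_add_right]
    abel
  rw [hmain, norm_smul, Real.norm_eq_abs, abs_of_nonneg (by positivity : (0:ℝ) ≤ 1/N)]
  have hterm : ∀ k ∈ Finset.range N,
      ‖outer (I k) (I k)
        + outer (I k) (mvec σ (X (((k:ℝ) + 1) / N) - X ((k:ℝ) / N)))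
        + outer (mvec σ (X (((k:ℝ) + 1) / N) - X ((k:ℝ) / N))) (I k)‖
      ≤ (C/N)^2 + (2*(C/N)*‖σ‖) * ‖X (((k:ℝ) + 1) / N) - X ((k:ℝ) / N)‖ := by
    intro k hk
    set s := mvec σ (X (((k:ℝ) + 1) / N) - X ((k:ℝ) / N))
    have hs : ‖s‖ ≤ ‖σ‖ * ‖X (((k:ℝ) + 1) / N) - X ((k:ℝ) / N)‖ := norm_mvec_le σ _
    have hIk := hInorm k hk
    have h1 : ‖outer (I k) (I k)‖ ≤ ‖I k‖ * ‖I k‖ := norm_outer_le _ _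
    have h2 : ‖outer (I k) s‖ ≤ ‖I k‖ * ‖s‖ := norm_outer_le _ _
    have h3 : ‖outer s (I k)‖ ≤ ‖s‖ * ‖I k‖ := norm_outer_le _ _
    have hIk0 : (0:ℝ) ≤ ‖I k‖ := norm_nonneg _
    have hs0 : (0:ℝ) ≤ ‖s‖ := norm_nonneg _
    have hX0' : (0:ℝ) ≤ ‖X (((k:ℝ) + 1) / N) - X ((k:ℝ) / N)‖ := norm_nonneg _
    have hσ0 : (0:ℝ) ≤ ‖σ‖ := norm_nonneg _
    calc ‖outer (I k) (I k) + outer (I k) s + outer s (I k)‖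
        ≤ ‖outer (I k) (I k)‖ + ‖outer (I k) s‖ + ‖outer s (I k)‖ :=
          norm_add₃_le
      _ ≤ ‖I k‖ * ‖I k‖ + ‖I k‖ * ‖s‖ + ‖s‖ * ‖I k‖ := by gcongr
      _ ≤ (C/N)^2 + (2*(C/N)*‖σ‖) * ‖X (((k:ℝ) + 1) / N) - X ((k:ℝ) / N)‖ := by
          have hCN0 : (0:ℝ) ≤ C/N := by positivity
          nlinarith [mul_le_mul hIk hs hs0 hCN0, mul_le_mul hs hIk hIk0 (by positivity),
            mul_le_mul hIk hIk hIk0 hCN0,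
            mul_le_mul_of_nonneg_left hs hCN0]
  calc (1/(N:ℝ)) * ‖∑ k ∈ Finset.range N,
          (outer (I k) (I k)
           + outer (I k) (mvec σ (X (((k:ℝ) + 1) / N) - X ((k:ℝ) / N)))
           + outer (mvec σ (X (((k:ℝ) + 1) / N) - X ((k:ℝ) / N))) (I k))‖
      ≤ (1/(N:ℝ)) * ∑ k ∈ Finset.range N,
          ((C/N)^2 + (2*(C/N)*‖σ‖) * ‖X (((k:ℝ) + 1) / N) - X ((k:ℝ) / N)‖) := by
        apply mul_le_mul_of_nonneg_left _ (by positivity)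
        exact le_trans (norm_sum_le _ _) (Finset.sum_le_sum hterm)
    _ = C ^ 2 / (N:ℝ) ^ 2 +
          (2 * ‖σ‖ * C / (N:ℝ) ^ 2) *
            ∑ k ∈ Finset.range N, ‖X (((k:ℝ) + 1) / N) - X ((k:ℝ) / N)‖ := by
        rw [Finset.sum_add_distrib, Finset.sum_const, Finset.card_range, nsmul_eq_mul,
          ← Finset.mul_sum]
        field_simp
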